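/- arXiv:2410.20797 — 3 statements merged into one kernel-verified Lean document; each statement's English description precedes it below -/
import Mathlib

section
/- Let η(x) be a probability vector over {1,…,c} with unique maximizer y = η*(x), and let Ȳ ⊂ {1,…,c}\{y} with a = argmax_{j∈Ȳ} η^j(x), b = argmax_{j∉{y}∪Ȳ} η^j(x), ∑_{j∈Ȳ} η^j(x) < 1. Define η'^j(x) = η^j(x)/(1 − ∑_{k∈Ȳ} η^k(x)) for j ∉ Ȳ, 0 otherwise. Suppose ε > 0, ε' > 0 satisfy ε' ≤ (η^y(x) − η^b(x))(η^y(x) − η^a(x)) / (8ε(1 − ∑_{j∈Ȳ} η^j(x))) and η^y(x) − η^a(x) ≤ 2ε. Then the reduced posterior has margin η'^y(x) − η'^b(x) ≥ 2ε'; since b is the second-best label of η', the reduced margin over all j ∉ {y} ∪ Ȳ exceeds 2ε'. -/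
/-- Key margin-amplification inequality in the proof of Theorem 1: under the assumed
bound on ε', the reduced posterior has margin `η' y - η' b ≥ 2ε'`, and since `b` is the
second-best label of `η'`, the reduced margin over all `j ∉ {y} ∪ Ybar` is at least 2ε'. -/
theorem stmt6 {c : ℕ} (η : Fin c → ℝ) (y : Fin c) (Ybar : Finset (Fin c))
    (a b : Fin c) (ε ε' : ℝ)
    (hnn : ∀ j, 0 ≤ η j) (hsum : ∑ j, η j = 1)
    (hy : ∀ j, j ≠ y → η j < η y) (hyY : y ∉ Ybar)
    (hlt : ∑ j ∈ Ybar, η j < 1)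
    (ha : a ∈ Ybar) (hamax : ∀ j ∈ Ybar, η j ≤ η a)
    (hby : b ≠ y) (hbY : b ∉ Ybar)
    (hbmax : ∀ j, j ≠ y → j ∉ Ybar → η j ≤ η b)
    (η' : Fin c → ℝ)
    (hdef : ∀ j, η' j = if j ∉ Ybar then η j / (1 - ∑ k ∈ Ybar, η k) else 0)
    (hε : 0 < ε) (hε' : 0 < ε')
    (hε'le : ε' ≤ (η y - η b) * (η y - η a) / (8 * ε * (1 - ∑ j ∈ Ybar, η j)))
    (hagap : η y - η a ≤ 2 * ε) :
    2 * ε' ≤ η' y - η' b ∧ ∀ j, j ≠ y → j ∉ Ybar → 2 * ε' ≤ η' y - η' j := by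
  set S := ∑ j ∈ Ybar, η j with hS
  have hD : 0 < 1 - S := by linarith
  have hyb : η b < η y := hy b hby
  have hya : η a < η y := hy a (fun h => hyY (h ▸ ha))
  have hη'y : η' y = η y / (1 - S) := by rw [hdef]; simp [hyY]
  have hη'b : η' b = η b / (1 - S) := by rw [hdef]; simp [hbY]
  have key : 2 * ε' ≤ (η y - η b) / (1 - S) := by
    rw [le_div_iff₀ (by positivity)] at hε'le
    rw [le_div_iff₀ hD]
    nlinarith [mul_pos hε hD, mul_nonneg (sub_pos.mpr hyb).le (sub_nonneg.mpr hagap)]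
  have hmain : 2 * ε' ≤ η' y - η' b := by
    rw [hη'y, hη'b, div_sub_div_same]; exact key
  refine ⟨hmain, fun j hjy hjY => ?_⟩
  have : η' j ≤ η' b := by
    rw [hdef j, hη'b]; simp only [hjY, not_false_iff, if_true]
    gcongr; exact hbmax j hjy hjY
  linarith
end

section
/- Let c ≥ 2, let η(x) be a probability vector with unique maximizer y = η*(x), Ȳ ⊂ {1,…,c}\{y} nonempty with ∑_{j∈Ȳ} η^j(x) < 1, a = argmax_{j∈Ȳ} η^j(x), b = argmax_{j∉{y}∪Ȳ} η^j(x). Let η' be the reduced posterior excluding Ȳ, and let φ : X → ℝ^c satisfy |φ^j(x) − η'^j(x)| ≤ ε' for all j, where 0 < ε' < (η^y(x) − η^b(x))(η^y(x) − η^a(x)) / (8ε(1 − ∑_{j∈Ȳ} η^j(x))) and η^y(x) − η^a(x) ≤ 2ε for some ε ∈ (0,1). Then argmax_j φ^j(x) = y; i.e., the auxiliary branch trained without Ȳ recovers the Bayes optimal label pointwise on instances troubled by disturbing labels in Ȳ. -/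
/-- Pointwise core of Theorem 1: the auxiliary branch φ trained without the disturbing
labels `Ybar` (uniformly ε'-close to the reduced posterior η') recovers the Bayes
optimal label `y` pointwise. -/
theorem stmt7 {c : ℕ} (hc : 2 ≤ c) (η : Fin c → ℝ) (y : Fin c) (Ybar : Finset (Fin c))
    (a b : Fin c) (ε ε' : ℝ)
    (hnn : ∀ j, 0 ≤ η j) (hsum : ∑ j, η j = 1)
    (hy : ∀ j, j ≠ y → η j < η y) (hyY : y ∉ Ybar) (hne : Ybar.Nonempty)
    (hlt : ∑ j ∈ Ybar, η j < 1)
    (ha : a ∈ Ybar) (hamax : ∀ j ∈ Ybar, η j ≤ η a)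
    (hby : b ≠ y) (hbY : b ∉ Ybar)
    (hbmax : ∀ j, j ≠ y → j ∉ Ybar → η j ≤ η b)
    (η' : Fin c → ℝ)
    (hdef : ∀ j, η' j = if j ∉ Ybar then η j / (1 - ∑ k ∈ Ybar, η k) else 0)
    (hε : 0 < ε) (hε1 : ε < 1) (hε' : 0 < ε')
    (hε'lt : ε' < (η y - η b) * (η y - η a) / (8 * ε * (1 - ∑ j ∈ Ybar, η j)))
    (hagap : η y - η a ≤ 2 * ε)
    (φ : Fin c → ℝ)
    (happrox : ∀ j, |φ j - η' j| ≤ ε') :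
    ∀ j, j ≠ y → φ j < φ y := by
  set S := ∑ j ∈ Ybar, η j with hSdef
  have hS1 : 0 < 1 - S := by linarith
  have hay : a ≠ y := fun h => hyY (h ▸ ha)
  have hao : η a < η y := hy a hay
  have hbo : η b < η y := hy b hby
  have hbnn : 0 ≤ η b := hnn b
  -- key: ε' * (4 * (1 - S)) < η y - η b
  have hkey : ε' * (4 * (1 - S)) < η y - η b := by
    have hden : 0 < 8 * ε * (1 - S) := by positivity
    have h1 : ε' * (8 * ε * (1 - S)) < (η y - η b) * (η y - η a) :=
      (lt_div_iff₀ hden).mp hε'lt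
    have h2 : (η y - η b) * (η y - η a) ≤ (η y - η b) * (2 * ε) := by
      apply mul_le_mul_of_nonneg_left hagap (by linarith)
    nlinarith [hε]
  have hηy' : η' y = η y / (1 - S) := by rw [hdef y, if_pos hyY]
  intro j hj
  have hφy : η' y - ε' ≤ φ y := by
    have := abs_le.mp (happrox y); linarith [this.1]
  have hφj : φ j ≤ η' j + ε' := by
    have := abs_le.mp (happrox j); linarith [(abs_le.mp (happrox j)).2]
  have hgap : 2 * ε' < η' y - η' j := by
    by_cases hjY : j ∈ Ybar
    · have : η' j = 0 := by rw [hdef j]; simp [hjY]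
      rw [this, hηy']
      rw [lt_sub_iff_add_lt, add_zero, lt_div_iff₀ hS1]
      nlinarith [hkey]
    · have : η' j = η j / (1 - S) := by rw [hdef j, if_pos hjY]
      rw [this, hηy', div_sub_div_same, lt_div_iff₀ hS1]
      have hjb : η j ≤ η b := hbmax j hj hjY
      nlinarith [hkey]
  linarith
end

section
/- Let η(x) be a probability vector over {1,…,c} with unique maximizer y = η*(x), second best s(x), and let Ȳ ⊂ {1,…,c}\{y} with ∑_{j∈Ȳ} η^j(x) < 1. Let a = argmax_{j∈Ȳ} η^j(x) and b = argmax_{j∉{y}∪Ȳ} η^j(x), and suppose every k ∉ {y} ∪ Ȳ satisfies η^k(x) < η^a(x) (so s(x) = a). Then the second-best label of the reduced posterior η' (excluding Ȳ) is b, and η'^y(x) − η'^b(x) = (η^y(x) − η^b(x))/(1 − ∑_{j∈Ȳ} η^j(x)) ≥ η^y(x) − η^a(x); i.e., the reduced margin is at least the original margin. -/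
/-- Removing the disturbing labels `Ybar` replaces the runner-up `a` by the weaker `b`
while inflating all remaining gaps: the second-best label of the reduced posterior is
`b`, the reduced top margin equals `(η y - η b)/(1 - ∑_{Ybar} η)`, and it is at least
the original margin `η y - η a`. -/
theorem stmt15 {c : ℕ} (η : Fin c → ℝ) (y : Fin c) (Ybar : Finset (Fin c))
    (a b : Fin c)
    (hnn : ∀ j, 0 ≤ η j) (hsum : ∑ j, η j = 1)
    (hy : ∀ j, j ≠ y → η j < η y) (hyY : y ∉ Ybar)
    (hlt : ∑ j ∈ Ybar, η j < 1)
    (ha : a ∈ Ybar) (hamax : ∀ j ∈ Ybar, η j ≤ η a)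
    (hby : b ≠ y) (hbY : b ∉ Ybar)
    (hbmax : ∀ j, j ≠ y → j ∉ Ybar → η j ≤ η b)
    (hsa : ∀ k, k ≠ y → k ∉ Ybar → η k < η a)
    (η' : Fin c → ℝ)
    (hdef : ∀ j, η' j = if j ∉ Ybar then η j / (1 - ∑ k ∈ Ybar, η k) else 0) :
    (∀ j, j ≠ y → η' j ≤ η' b) ∧
      η' y - η' b = (η y - η b) / (1 - ∑ j ∈ Ybar, η j) ∧
      η y - η a ≤ η' y - η' b := by
  set S := ∑ k ∈ Ybar, η k with hS
  have hS0 : 0 ≤ S := Finset.sum_nonneg fun j _ => hnn j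
  have hD : 0 < 1 - S := by linarith
  have hD1 : 1 - S ≤ 1 := by linarith
  have hb' : η' b = η b / (1 - S) := by rw [hdef]; simp [hbY]
  have hy' : η' y = η y / (1 - S) := by rw [hdef]; simp [hyY]
  have hba : η b < η a := hsa b hby hbY
  have hbylt : η b < η y := hy b hby
  refine ⟨?_, ?_, ?_⟩
  · intro j hj
    rw [hdef j, hb']
    by_cases hjY : j ∈ Ybar
    · simp [hjY]
      exact div_nonneg (hnn b) hD.le
    · simp [hjY]
      exact div_le_div_of_nonneg_right (hbmax j hj hjY) hD.le  -- maybe wrong name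
  · rw [hy', hb']; ring
  · rw [hy', hb']
    rw [div_sub_div_same]
    rw [le_div_iff₀ hD]
    nlinarith
end
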